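/- Consider the input affine system ẋ = f(x) + g(x)u, y = h(x), and let V : ℝⁿ → ℝ be differentiable with V(x) ≥ 0 for all x and V(0) = 0. Then the negative imaginary dissipation inequality ∇V(x)ᵀ (f(x) + g(x)u) ≤ uᵀ ∇h(x)ᵀ (f(x) + g(x)u) holds for all x, u ∈ ℝⁿ if and only if there exist an integer q ≥ 1 and functions L : ℝⁿ → ℝ^q, W : ℝⁿ → ℝ^{q×n} such that for all x ∈ ℝⁿ: (i) (1/2) g(x)ᵀ∇V(x) = (1/2) ∇h(x)ᵀ f(x) − W(x)ᵀ L(x), (ii) ∇V(x)ᵀ f(x) = −L(x)ᵀ L(x), and (iii) the symmetric part of g(x)ᵀ ∇h(x) equals W(x)ᵀ W(x). -/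

import Mathlib

open Matrix


lemma NI_aux_quad_coeff (c β γ : ℝ) (hc : 0 ≤ c)
    (h : ∀ s : ℝ, 0 ≤ c + s * β + s ^ 2 * γ) : 0 ≤ γ := by
  by_contra hγ
  push_neg at hγ
  have hγ' : 0 < -γ := by linarith
  set s : ℝ := max 1 ((|β| + c + 1) / (-γ)) with hs
  have hs1 : 1 ≤ s := le_max_left _ _
  have hsq : (|β| + c + 1) / (-γ) ≤ s := le_max_right _ _
  have h2 : |β| + c + 1 ≤ s * (-γ) := (div_le_iff₀ hγ').mp hsq
  have h3 := h s
  have habs : β ≤ |β| := le_abs_self β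
  nlinarith [mul_nonneg (by linarith : (0:ℝ) ≤ s) (by linarith : (0:ℝ) ≤ s * (-γ) - (|β| + c + 1)),
    mul_nonneg (by linarith : (0:ℝ) ≤ s) (by linarith : (0:ℝ) ≤ |β| - β)]

lemma NI_quad_split {n : ℕ} (c : ℝ) (b : Fin n → ℝ) (S : Matrix (Fin n) (Fin n) ℝ)
    (v : Fin (n+1) → ℝ) :
    v ⬝ᵥ ((Matrix.of (Fin.cons (Fin.cons c (fun j => b j / 2))
        (fun i => Fin.cons (b i / 2) (fun j => S i j)))
        : Matrix (Fin (n+1)) (Fin (n+1)) ℝ) *ᵥ v)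
      = c * v 0 ^ 2 + v 0 * (b ⬝ᵥ (v ∘ Fin.succ)) + (v ∘ Fin.succ) ⬝ᵥ (S *ᵥ (v ∘ Fin.succ)) := by
  simp only [dotProduct, mulVec, Fin.sum_univ_succ, Matrix.of_apply, Fin.cons_zero, Fin.cons_succ,
    Function.comp_apply, mul_add, add_mul, Finset.mul_sum, Finset.sum_add_distrib]
  ring_nf
  rw [Finset.sum_comm]
  have hc : (∑ x : Fin n, v 0 * v x.succ * b x * (1 / 2))
      + ∑ x : Fin n, v 0 * b x * v x.succ * (1 / 2) = ∑ x : Fin n, v 0 * b x * v x.succ := by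
    rw [← Finset.sum_add_distrib]
    exact Finset.sum_congr rfl fun x _ => by ring
  linarith [hc]

lemma NI_dot_mulVec {n m : ℕ} (v : Fin n → ℝ) (A : Matrix (Fin n) (Fin m) ℝ) (u : Fin m → ℝ) :
    v ⬝ᵥ (A *ᵥ u) = (Aᵀ *ᵥ v) ⬝ᵥ u := by
  rw [dotProduct_mulVec, mulVec_transpose]

lemma NI_quadform_transpose {n : ℕ} (M : Matrix (Fin n) (Fin n) ℝ) (u : Fin n → ℝ) :
    u ⬝ᵥ (Mᵀ *ᵥ u) = u ⬝ᵥ (M *ᵥ u) := by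
  rw [NI_dot_mulVec, transpose_transpose, dotProduct_comm]

lemma NI_sym_quadform {n : ℕ} (A : Matrix (Fin n) (Fin n) ℝ) (u : Fin n → ℝ) :
    u ⬝ᵥ (((1/2 : ℝ) • (A + Aᵀ)) *ᵥ u) = u ⬝ᵥ (Aᵀ *ᵥ u) := by
  rw [smul_mulVec, dotProduct_smul, add_mulVec, dotProduct_add, NI_quadform_transpose,
    smul_eq_mul]
  ring

lemma NI_psd_factor {m : ℕ} (M : Matrix (Fin m) (Fin m) ℝ) (hM : M.PosSemidef) :
    ∃ B : Matrix (Fin m) (Fin m) ℝ, M = Bᴴ * B := by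
  open scoped MatrixOrder in
  exact CStarAlgebra.nonneg_iff_eq_star_mul_self.mp hM.nonneg

/-- For the input affine system ẋ = f(x) + g(x)u, y = h(x), with a
nonnegative differentiable storage function `V`, `V 0 = 0`, the negative
imaginary dissipation inequality `∇V(x)ᵀ(f(x) + g(x)u) ≤ uᵀ∇h(x)ᵀ(f(x) + g(x)u)`
holds for all `x`, `u` iff there exist `q ≥ 1` and functions `L : ℝⁿ → ℝ^q`,
`W : ℝⁿ → ℝ^{q×n}` such that for all `x`:
(i) `(1/2) g(x)ᵀ∇V(x) = (1/2)∇h(x)ᵀf(x) − W(x)ᵀL(x)`,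
(ii) `∇V(x)ᵀf(x) = −L(x)ᵀL(x)`,
(iii) the symmetric part of `g(x)ᵀ∇h(x)` equals `W(x)ᵀW(x)`. -/
theorem negativeImaginary_iff_factorization {n : ℕ}
    (f : (Fin n → ℝ) → (Fin n → ℝ))
    (g : (Fin n → ℝ) → Matrix (Fin n) (Fin n) ℝ)
    (h : (Fin n → ℝ) → (Fin n → ℝ))
    (hf0 : f 0 = 0) (hh0 : h 0 = 0)
    (V : (Fin n → ℝ) → ℝ)
    (gradV : (Fin n → ℝ) → (Fin n → ℝ))
    (gradh : (Fin n → ℝ) → Matrix (Fin n) (Fin n) ℝ)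
    (hVdiff : Differentiable ℝ V)
    (hVgrad : ∀ x v, fderiv ℝ V x v = gradV x ⬝ᵥ v)
    (hhdiff : Differentiable ℝ h)
    (hhgrad : ∀ x v, fderiv ℝ h x v = (gradh x)ᵀ *ᵥ v)
    (hVnonneg : ∀ x, 0 ≤ V x) (hV0 : V 0 = 0) :
    (∀ x u : Fin n → ℝ,
        gradV x ⬝ᵥ (f x + g x *ᵥ u) ≤ u ⬝ᵥ ((gradh x)ᵀ *ᵥ (f x + g x *ᵥ u)))
    ↔ ∃ q : ℕ, 1 ≤ q ∧
        ∃ (L : (Fin n → ℝ) → (Fin q → ℝ)) (W : (Fin n → ℝ) → Matrix (Fin q) (Fin n) ℝ),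
          ∀ x : Fin n → ℝ,
            (1/2 : ℝ) • ((g x)ᵀ *ᵥ gradV x)
                = (1/2 : ℝ) • ((gradh x)ᵀ *ᵥ f x) - (W x)ᵀ *ᵥ L x
            ∧ gradV x ⬝ᵥ f x = -(L x ⬝ᵥ L x)
            ∧ (1/2 : ℝ) • ((g x)ᵀ * gradh x + ((g x)ᵀ * gradh x)ᵀ)
                = (W x)ᵀ * W x := by
  set c : (Fin n → ℝ) → ℝ := fun x => -(gradV x ⬝ᵥ f x) with hc_def
  set b : (Fin n → ℝ) → (Fin n → ℝ) :=
    fun x => (gradh x)ᵀ *ᵥ f x - (g x)ᵀ *ᵥ gradV x with hb_def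
  set S : (Fin n → ℝ) → Matrix (Fin n) (Fin n) ℝ :=
    fun x => (1/2 : ℝ) • ((g x)ᵀ * gradh x + ((g x)ᵀ * gradh x)ᵀ) with hS_def
  -- identity: u ⬝ᵥ (S x *ᵥ u) = u ⬝ᵥ ((gradh x)ᵀ *ᵥ (g x *ᵥ u))
  have hSq : ∀ x (u : Fin n → ℝ), u ⬝ᵥ (S x *ᵥ u) = u ⬝ᵥ ((gradh x)ᵀ *ᵥ (g x *ᵥ u)) := by
    intro x u
    rw [hS_def]
    rw [NI_sym_quadform, transpose_mul, transpose_transpose, mulVec_mulVec]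
  have hgV : ∀ x (u : Fin n → ℝ),
      gradV x ⬝ᵥ (g x *ᵥ u) = ((g x)ᵀ *ᵥ gradV x) ⬝ᵥ u := fun x u => NI_dot_mulVec _ _ _
  constructor
  · intro hdis
    -- the quadratic-in-u dissipation form
    have key : ∀ x (u : Fin n → ℝ), 0 ≤ c x + b x ⬝ᵥ u + u ⬝ᵥ (S x *ᵥ u) := by
      intro x u
      have h1 := hdis x u
      rw [dotProduct_add, mulVec_add, dotProduct_add] at h1
      have hb1 : b x ⬝ᵥ u = ((gradh x)ᵀ *ᵥ f x) ⬝ᵥ u - ((g x)ᵀ *ᵥ gradV x) ⬝ᵥ u := by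
        rw [hb_def]; exact sub_dotProduct _ _ _
      have hfu : ((gradh x)ᵀ *ᵥ f x) ⬝ᵥ u = u ⬝ᵥ ((gradh x)ᵀ *ᵥ f x) := dotProduct_comm _ _
      have := hgV x u
      have := hSq x u
      simp only [hc_def]
      linarith
    have hc0 : ∀ x, 0 ≤ c x := by
      intro x
      have := key x 0
      simpa using this
    -- nonnegativity of quadratic form in (t, u)
    have hq2 : ∀ x (t : ℝ) (u : Fin n → ℝ),
        0 ≤ c x * t ^ 2 + t * (b x ⬝ᵥ u) + u ⬝ᵥ (S x *ᵥ u) := by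
      intro x t u
      have hscale : ∀ s : ℝ,
          0 ≤ c x + s * (b x ⬝ᵥ u) + s ^ 2 * (u ⬝ᵥ (S x *ᵥ u)) := by
        intro s
        have := key x (s • u)
        rw [dotProduct_smul, mulVec_smul, smul_dotProduct, dotProduct_smul] at this
        simpa [smul_eq_mul, sq, mul_assoc, mul_comm, mul_left_comm] using this
      rcases eq_or_ne t 0 with rfl | ht
      · have hSnn : 0 ≤ u ⬝ᵥ (S x *ᵥ u) :=
          NI_aux_quad_coeff _ _ _ (hc0 x) hscale
        simpa using hSnn
      · have h1 := hscale t⁻¹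
        have ht2 : (0:ℝ) < t ^ 2 := by positivity
        have heq : c x * t ^ 2 + t * (b x ⬝ᵥ u) + u ⬝ᵥ (S x *ᵥ u)
            = t ^ 2 * (c x + t⁻¹ * (b x ⬝ᵥ u) + (t⁻¹) ^ 2 * (u ⬝ᵥ (S x *ᵥ u))) := by
          field_simp
        rw [heq]
        exact mul_nonneg ht2.le h1
    -- assemble the big PSD matrix
    set P : (Fin n → ℝ) → Matrix (Fin (n+1)) (Fin (n+1)) ℝ :=
      fun x => Matrix.of (Fin.cons (Fin.cons (c x) (fun j => b x j / 2))
        (fun i => Fin.cons (b x i / 2) (fun j => S x i j))) with hP_def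
    have hSsymm : ∀ x, (S x)ᵀ = S x := by
      intro x
      rw [hS_def]
      simp [transpose_smul, transpose_add, transpose_transpose, add_comm]
    have hPsd : ∀ x, (P x).PosSemidef := by
      intro x
      refine posSemidef_iff_dotProduct_mulVec.mpr ⟨?_, ?_⟩
      · -- Hermitian
        refine Matrix.ext fun i j => ?_
        simp only [conjTranspose_apply, star_trivial]
        induction i using Fin.cases with
        | zero =>
          induction j using Fin.cases with
          | zero => rfl
          | succ j => simp [hP_def]
        | succ i =>
          induction j using Fin.cases with
          | zero => simp [hP_def]
          | succ j =>
            simp only [hP_def, Matrix.of_apply, Fin.cons_succ]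
            have := congrFun (congrFun (hSsymm x) i) j
            simpa [transpose_apply] using this
      · intro v
        rw [star_trivial, hP_def]
        rw [NI_quad_split]
        exact hq2 x (v 0) (v ∘ Fin.succ)
    choose B hB using fun x => NI_psd_factor _ (hPsd x)
    have hBentry : ∀ x (i j : Fin (n+1)), P x i j = ∑ k, B x k i * B x k j := by
      intro x i j
      rw [hB x]
      simp [Matrix.mul_apply, conjTranspose_apply]
    refine ⟨n+1, by omega, fun x j => B x j 0,
      fun x => Matrix.of (fun j i => B x j i.succ), fun x => ?_⟩
    refine ⟨?_, ?_, ?_⟩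
    · funext i
      have h1 : P x i.succ 0 = b x i / 2 := by simp [hP_def]
      rw [hBentry] at h1
      have h2 : ((Matrix.of (fun j i => B x j i.succ) : Matrix (Fin (n+1)) (Fin n) ℝ)ᵀ *ᵥ
          (fun j => B x j 0)) i = ∑ k, B x k i.succ * B x k 0 := by
        simp [mulVec, dotProduct, transpose_apply]
      simp only [Pi.smul_apply, Pi.sub_apply, smul_eq_mul, h2]
      have h3 : b x i = ((gradh x)ᵀ *ᵥ f x) i - ((g x)ᵀ *ᵥ gradV x) i := by
        rw [hb_def]; rfl
      rw [h1] at *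
      linarith [h3, h1]
    · have h1 : P x 0 0 = c x := by simp [hP_def]
      rw [hBentry] at h1
      have h2 : (fun j => B x j 0) ⬝ᵥ (fun j => B x j 0) = ∑ k, B x k 0 * B x k 0 := rfl
      rw [h2, h1, hc_def]
      ring
    · refine Matrix.ext fun i j => ?_
      have h1 : P x i.succ j.succ = S x i j := by simp [hP_def]
      rw [hBentry] at h1
      have h2 : ((Matrix.of (fun j i => B x j i.succ) : Matrix (Fin (n+1)) (Fin n) ℝ)ᵀ *
          (Matrix.of (fun j i => B x j i.succ))) i j = ∑ k, B x k i.succ * B x k j.succ := by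
        simp [Matrix.mul_apply, transpose_apply]
      exact (h2.trans h1).symm
  · rintro ⟨q, hq1, L, W, hLW⟩ x u
    obtain ⟨h1, h2, h3⟩ := hLW x
    have key : 0 ≤ (L x + W x *ᵥ u) ⬝ᵥ (L x + W x *ᵥ u) :=
      Finset.sum_nonneg fun i _ => mul_self_nonneg _
    rw [dotProduct_add, add_dotProduct, add_dotProduct] at key
    have hcross : L x ⬝ᵥ (W x *ᵥ u) = ((W x)ᵀ *ᵥ L x) ⬝ᵥ u := NI_dot_mulVec _ _ _
    have hcross2 : (W x *ᵥ u) ⬝ᵥ L x = ((W x)ᵀ *ᵥ L x) ⬝ᵥ u := by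
      rw [dotProduct_comm]; exact hcross
    have hWL : ((W x)ᵀ *ᵥ L x) ⬝ᵥ u
        = (1/2 : ℝ) * (((gradh x)ᵀ *ᵥ f x) ⬝ᵥ u) - (1/2 : ℝ) * ((g x)ᵀ *ᵥ gradV x) ⬝ᵥ u := by
      have : (W x)ᵀ *ᵥ L x = (1/2 : ℝ) • ((gradh x)ᵀ *ᵥ f x) - (1/2 : ℝ) • ((g x)ᵀ *ᵥ gradV x) := by
        rw [eq_sub_iff_add_eq] at h1
        rw [← h1]
        module
      rw [this, sub_dotProduct, smul_dotProduct, smul_dotProduct, smul_eq_mul, smul_eq_mul]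
    have hWW : (W x *ᵥ u) ⬝ᵥ (W x *ᵥ u) = u ⬝ᵥ ((gradh x)ᵀ *ᵥ (g x *ᵥ u)) := by
      have e1 : (W x *ᵥ u) ⬝ᵥ (W x *ᵥ u) = u ⬝ᵥ (((W x)ᵀ * W x) *ᵥ u) := by
        rw [NI_dot_mulVec, dotProduct_comm, mulVec_mulVec]
      rw [e1, ← h3]
      exact hSq x u
    rw [dotProduct_add, mulVec_add, dotProduct_add]
    have hfu : ((gradh x)ᵀ *ᵥ f x) ⬝ᵥ u = u ⬝ᵥ ((gradh x)ᵀ *ᵥ f x) := dotProduct_comm _ _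
    have := hgV x u
    linarith [key, h2, hcross, hcross2, hWL, hWW, hfu, this]
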